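/- arXiv:1708.04908 — 4 statements merged into one kernel-verified Lean document; each statement's English description precedes it below -/
import Mathlib

section
/- Fix ε with 0 < ε < 1. Let G be drawn from G_{n,p} with p = c·log n / n, where c = c(n) ≥ 1 and (c−1)·log n → ∞ as n → ∞. Then with high probability the number of vertices of G whose degree is more than (1+ε)·np is at most n^{1−ε²c/4}. -/
open Filter
open scoped BigOperators Classical

noncomputable section

namespace CF

variable {V : Type*} [Fintype V] [DecidableEq V]

/-- The degree of a vertex `v` in the graph `G`. -/
def deg (G : SimpleGraph V) (v : V) : ℕ :=
  (Finset.univ.filter fun w => G.Adj v w).card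

/-- The edge bias `ψ(v,w) = 1 / min(d(v), d(w))` for adjacent `v, w`, and `0` otherwise. -/
def psi (G : SimpleGraph V) (v w : V) : ℝ :=
  if G.Adj v w then ((min (deg G v) (deg G w) : ℕ) : ℝ)⁻¹ else 0

/-- `Ψ(v) = Σ_{w ∈ N(v)} ψ(v,w)`  (the sum may be taken over all `w` since `ψ` vanishes
off the neighbourhood). -/
def Psi (G : SimpleGraph V) (v : V) : ℝ := ∑ w, psi G v w

/-- The stationary distribution `π(v) = Ψ(v) / Σ_u Ψ(u)` of the biased random walk. -/
def statPi (G : SimpleGraph V) (v : V) : ℝ := Psi G v / ∑ u, Psi G u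

/-- The one-step transition probability `P(v,w) = ψ(v,w)/Ψ(v)` of the biased random walk. -/
def step (G : SimpleGraph V) (v w : V) : ℝ := psi G v w / Psi G v

/-- The transition matrix of the biased random walk. -/
def stepMatrix (G : SimpleGraph V) : Matrix V V ℝ := Matrix.of fun v w => step G v w

/-- `R_v = Σ_{t=0}^{T-1} P^{(t)}(v,v)`, the expected number of visits to `v`
(including time 0) of the biased walk started at `v` during the first `T` steps. -/
def Rv (G : SimpleGraph V) (T : ℕ) (v : V) : ℝ :=
  ∑ t ∈ Finset.range T, (stepMatrix G ^ t) v v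

/-- Probability that a walk with transition kernel `P` follows the trajectory `x`
(conditional on starting at `x 0`). -/
def trajProbP (P : V → V → ℝ) {t : ℕ} (x : Fin (t + 1) → V) : ℝ :=
  ∏ i : Fin t, P (x i.castSucc) (x i.succ)

/-- Probability that the walk with kernel `P` started at `u` has not visited every
vertex among its positions at times `0, 1, …, t`. -/
def notCoveredProbP (P : V → V → ℝ) (u : V) (t : ℕ) : ℝ :=
  ∑ x ∈ Finset.univ.filter (fun x : Fin (t + 1) → V =>
      x 0 = u ∧ Finset.image x Finset.univ ≠ Finset.univ), trajProbP P x

/-- Expected cover time of the walk with kernel `P` started from `u`,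
via `E[T_cov] = Σ_{t ≥ 0} P(T_cov > t)`. -/
def coverTimeFromP (P : V → V → ℝ) (u : V) : ℝ := ∑' t : ℕ, notCoveredProbP P u t

/-- Cover time of the walk with kernel `P`: the maximum over starting vertices. -/
def coverTimeP (P : V → V → ℝ) : ℝ := ⨆ u, coverTimeFromP P u

/-- Expected time for the biased random walk started at `u` to visit every vertex. -/
def coverTimeFrom (G : SimpleGraph V) (u : V) : ℝ := coverTimeFromP (step G) u

/-- The cover time `C̄(G)` of the biased random walk on `G`. -/
def coverTime (G : SimpleGraph V) : ℝ := coverTimeP (step G)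

/-- Probability that the biased walk on `G` started at `w` avoids the set `F`
at all times `0, 1, …, t`. -/
def avoidProb (G : SimpleGraph V) (w : V) (t : ℕ) (F : Finset V) : ℝ :=
  ∑ x ∈ Finset.univ.filter (fun x : Fin (t + 1) → V =>
      x 0 = w ∧ ∀ i, x i ∉ F), trajProbP (step G) x

/-- `e(S,S)`: the number of edges of `G` with both endpoints in `S`. -/
def eIn (G : SimpleGraph V) (S : Finset V) : ℕ :=
  (Finset.univ.filter fun e : Sym2 V => e ∈ G.edgeSet ∧ ∀ x ∈ e, x ∈ S).card

/-- `e(S, S̄)`: the number of edges of `G` with exactly one endpoint in `S`. -/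
def eCross (G : SimpleGraph V) (S : Finset V) : ℕ :=
  (Finset.univ.filter fun e : Sym2 V =>
    e ∈ G.edgeSet ∧ ∃ x ∈ S, ∃ y ∈ Sᶜ, e = s(x, y)).card

/-- The graph obtained from `G` by contracting the (non-adjacent) vertices `u` and `v`
into a single vertex, represented by `u`; the vertex `v` is left isolated. -/
def contract (G : SimpleGraph V) (u v : V) : SimpleGraph V :=
  SimpleGraph.fromRel fun x y =>
    x ≠ v ∧ y ≠ v ∧ (G.Adj x y ∨ (x = u ∧ G.Adj v y))

/-- The graph on `Fin n` determined by a configuration of edge indicators. -/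
def graphOf {n : ℕ} (ω : Sym2 (Fin n) → Bool) : SimpleGraph (Fin n) :=
  SimpleGraph.fromRel fun x y => ω s(x, y)

/-- The product Bernoulli(p) weight of a configuration of edge indicators. -/
def wt {n : ℕ} (p : ℝ) (ω : Sym2 (Fin n) → Bool) : ℝ :=
  ∏ e : Sym2 (Fin n), (if ω e then p else 1 - p)

/-- The probability that the Erdős–Rényi random graph `G_{n,p}` satisfies `Q`. -/
def gnp (n : ℕ) (p : ℝ) (Q : SimpleGraph (Fin n) → Prop) : ℝ :=
  ∑ ω ∈ Finset.univ.filter (fun ω : Sym2 (Fin n) → Bool => Q (graphOf ω)), wt p ω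

/-- A graph `G` on vertex set `Fin n` is *typical* (for the parameters `ε` and `c`,
with `p = c log n / n`) if it satisfies conditions (a)–(i) of Lemma 4 (Cooper–Frieze–Petti). -/
def Typical (ε c : ℝ) {n : ℕ} (G : SimpleGraph (Fin n)) : Prop :=
  let p : ℝ := c * Real.log n / n
  let np : ℝ := (n : ℝ) * p
  let Lam : ℝ := Real.log (Real.log n)
  let A : Finset (Fin n) := Finset.univ.filter fun v => (deg G v : ℝ) < np / 100
  -- (a) connectivity
  G.Connected ∧
  -- (b) few vertices of low degree
  (((Finset.univ.filter fun v : Fin n => (deg G v : ℝ) < (1 - ε) * np).card : ℝ)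
      ≤ (n : ℝ) ^ (1 - ε ^ 2 * c / 4)) ∧
  -- (c) few vertices of high degree
  (((Finset.univ.filter fun v : Fin n => (1 + ε) * np < (deg G v : ℝ)).card : ℝ)
      ≤ (n : ℝ) ^ (1 - ε ^ 2 * c / 4)) ∧
  -- (d) maximum degree
  (∀ v : Fin n, (deg G v : ℝ) ≤ 4 * np) ∧
  -- (e) few vertices of each small degree
  (∀ k : ℕ, (k : ℝ) ≤ Lam →
      ((Finset.univ.filter fun v : Fin n => deg G v = k).card : ℝ)
        ≤ (3 * Real.log n) ^ (k + 1)) ∧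
  -- (f)(i) the set A of small-degree vertices is small
  ((A.card : ℝ) < (n : ℝ) ^ ((17 : ℝ) / 12 - c)) ∧
  -- (f)(ii) no vertex of A within distance Λ of a short cycle
  (∀ v ∈ A, ∀ x : Fin n, ∀ w : G.Walk x x, w.IsCycle → (w.length : ℝ) < Lam →
      ∀ y ∈ w.support, Lam < (G.dist v y : ℝ)) ∧
  -- (f)(iii) vertices of A are far apart
  (∀ u ∈ A, ∀ v ∈ A, u ≠ v → Lam < (G.dist u v : ℝ)) ∧
  -- (g) no small dense subgraphs
  (np ≤ (n : ℝ) ^ ((1 : ℝ) / 100) →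
      ∀ S : Finset (Fin n), S.card ≤ 50 → eIn G S ≤ S.card) ∧
  -- (h) edge expansion of large sets
  (∀ S : Finset (Fin n), 1 / p ≤ (S.card : ℝ) → (S.card : ℝ) ≤ (n : ℝ) / 2 →
      (S.card : ℝ) * ((n : ℝ) - S.card) * p / 2 ≤ (eCross G S : ℝ)) ∧
  -- (i) small sets are sparse
  (∀ S : Finset (Fin n), (S.card : ℝ) < 1 / p →
      (eIn G S : ℝ) < (S.card : ℝ) * np / 1000)

end CF

namespace CFP
open Finset Real CF
variable {n : ℕ}

lemma sum_prod_bool (f : Sym2 (Fin n) → Bool → ℝ) :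
    ∑ ω : Sym2 (Fin n) → Bool, ∏ e, f e (ω e) = ∏ e, (f e true + f e false) := by
  classical
  have h := Finset.prod_univ_sum (fun _ : Sym2 (Fin n) => (Finset.univ : Finset Bool))
      (fun e b => f e b)
  rw [Fintype.piFinset_univ] at h
  simpa [Fintype.piFinset_univ, Fintype.sum_bool] using h.symm

lemma sum_wt (p : ℝ) : ∑ ω : Sym2 (Fin n) → Bool, wt p ω = 1 := by
  have h := sum_prod_bool (n := n) (fun _ b => if b then p else 1 - p)
  simp only [wt] at *
  rw [h]; simp

lemma mgf (p E : ℝ) (v : Fin n) :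
    ∑ ω : Sym2 (Fin n) → Bool,
      wt p ω * ∏ w ∈ Finset.univ.erase v, (if ω s(v, w) then E else 1)
      = (1 - p + p * E) ^ (n - 1) := by
  classical
  set Ev : Finset (Sym2 (Fin n)) := (Finset.univ.erase v).image (fun w => s(v, w)) with hEv
  have hinj : ∀ x ∈ Finset.univ.erase v, ∀ y ∈ Finset.univ.erase v,
      s(v, x) = s(v, y) → x = y := by
    intro x hx y hy hxy
    rw [Sym2.eq_iff] at hxy
    rcases hxy with ⟨-, h⟩ | ⟨h1, h2⟩
    · exact h
    · exact absurd h1.symm (Finset.ne_of_mem_erase hy)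
  have hcard : Ev.card = n - 1 := by
    rw [hEv, Finset.card_image_of_injOn hinj, Finset.card_erase_of_mem (Finset.mem_univ v),
      Finset.card_univ, Fintype.card_fin]
  calc ∑ ω : Sym2 (Fin n) → Bool,
      wt p ω * ∏ w ∈ Finset.univ.erase v, (if ω s(v, w) then E else 1)
      = ∑ ω : Sym2 (Fin n) → Bool, ∏ e,
          ((if ω e then p else 1 - p) *
            (if e ∈ Ev then (if ω e then E else 1) else 1)) := by
        refine Finset.sum_congr rfl fun ω _ => ?_
        rw [Finset.prod_mul_distrib]
        congr 1
        rw [Finset.prod_ite_mem, Finset.univ_inter, hEv,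
          Finset.prod_image hinj]
    _ = ∏ e : Sym2 (Fin n),
          ((p * (if e ∈ Ev then E else 1)) + ((1 - p) * (if e ∈ Ev then 1 else 1))) := by
        have := sum_prod_bool (fun e b => (if b then p else 1 - p) *
            (if e ∈ Ev then (if b then E else 1) else 1))
        simpa using this
    _ = ∏ e : Sym2 (Fin n), (if e ∈ Ev then 1 - p + p * E else 1) := by
        refine Finset.prod_congr rfl fun e _ => ?_
        split <;> ring
    _ = (1 - p + p * E) ^ Ev.card := by
        rw [Finset.prod_ite_mem, Finset.univ_inter, Finset.prod_const]
    _ = (1 - p + p * E) ^ (n - 1) := by rw [hcard]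

lemma wt_nonneg {p : ℝ} (hp0 : 0 ≤ p) (hp1 : p ≤ 1) (ω : Sym2 (Fin n) → Bool) :
    0 ≤ wt p ω := by
  refine Finset.prod_nonneg fun e _ => ?_
  split <;> linarith

lemma adj_graphOf (ω : Sym2 (Fin n) → Bool) (v w : Fin n) :
    (graphOf ω).Adj v w ↔ v ≠ w ∧ ω s(v, w) := by
  rw [graphOf, SimpleGraph.fromRel_adj]
  constructor
  · rintro ⟨h, h2 | h2⟩
    · exact ⟨h, h2⟩
    · exact ⟨h, by rwa [Sym2.eq_swap]⟩
  · rintro ⟨h, h2⟩; exact ⟨h, Or.inl h2⟩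

lemma deg_graphOf (ω : Sym2 (Fin n) → Bool) (v : Fin n) :
    deg (graphOf ω) v = ((Finset.univ.erase v).filter fun w => ω s(v, w)).card := by
  unfold deg
  congr 1
  ext w
  simp only [Finset.mem_filter, Finset.mem_erase, Finset.mem_univ, true_and, adj_graphOf]
  constructor
  · rintro ⟨h1, h2⟩; exact ⟨⟨Ne.symm h1, trivial⟩, h2⟩
  · rintro ⟨⟨h1, -⟩, h2⟩; exact ⟨Ne.symm h1, h2⟩

lemma prod_ite_exp (ω : Sym2 (Fin n) → Bool) (v : Fin n) (s : ℝ) :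
    ∏ w ∈ Finset.univ.erase v, (if ω s(v, w) then Real.exp s else 1)
      = Real.exp (s * (deg (graphOf ω) v)) := by
  rw [Finset.prod_ite, Finset.prod_const, Finset.prod_const, one_pow, mul_one,
    deg_graphOf, mul_comm, Real.exp_nat_mul]

lemma key_ineq (ε : ℝ) (hε0 : 0 < ε) (hε1 : ε < 1) :
    Real.exp (2 * ε / 3) - 1 - (1 + ε) * (2 * ε / 3) ≤ -(ε ^ 2) / 3 := by
  have habs : |2 * ε / 3| ≤ 1 := by rw [abs_of_nonneg (by linarith)]; linarith
  have hb := Real.exp_bound habs (n := 2) (by norm_num)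
  have hsum : ∑ m ∈ Finset.range 2, (2 * ε / 3) ^ m / (m.factorial : ℝ)
      = 1 + 2 * ε / 3 := by
    simp [Finset.sum_range_succ]
  rw [hsum] at hb
  have h2 : Real.exp (2 * ε / 3) - (1 + 2 * ε / 3)
      ≤ |2 * ε / 3| ^ 2 * ((2 : ℕ).succ / ((2 : ℕ).factorial * (2 : ℕ))) :=
    le_trans (le_abs_self _) hb
  rw [sq_abs] at h2
  norm_num at h2
  nlinarith

lemma tail (p ε : ℝ) (hp0 : 0 ≤ p) (hp1 : p ≤ 1) (hε0 : 0 < ε) (hε1 : ε < 1) (v : Fin n) :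
    ∑ ω ∈ Finset.univ.filter (fun ω : Sym2 (Fin n) → Bool =>
        (1 + ε) * (n * p) < (deg (graphOf ω) v : ℝ)), wt p ω
      ≤ Real.exp (-(ε ^ 2) * (n * p) / 3) := by
  classical
  set s : ℝ := 2 * ε / 3 with hs
  set τ : ℝ := (1 + ε) * (n * p) with hτ
  have hs0 : 0 < s := by rw [hs]; linarith
  have hnp0 : (0 : ℝ) ≤ n * p := by positivity
  have hτ0 : 0 ≤ τ := by rw [hτ]; positivity
  have hprod_nonneg : ∀ ω : Sym2 (Fin n) → Bool,
      0 ≤ wt p ω * ∏ w ∈ Finset.univ.erase v, (if ω s(v, w) then Real.exp s else 1) := by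
    intro ω
    refine mul_nonneg (wt_nonneg hp0 hp1 ω) (Finset.prod_nonneg fun w _ => ?_)
    split
    · exact (Real.exp_pos s).le
    · norm_num
  have step1 : ∑ ω ∈ Finset.univ.filter (fun ω : Sym2 (Fin n) → Bool =>
        τ < (deg (graphOf ω) v : ℝ)), wt p ω
      ≤ ∑ ω ∈ Finset.univ.filter (fun ω : Sym2 (Fin n) → Bool =>
        τ < (deg (graphOf ω) v : ℝ)),
        Real.exp (-(s * τ)) *
          (wt p ω * ∏ w ∈ Finset.univ.erase v, (if ω s(v, w) then Real.exp s else 1)) := by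
    refine Finset.sum_le_sum fun ω hω => ?_
    have hτd : τ < (deg (graphOf ω) v : ℝ) := (Finset.mem_filter.mp hω).2
    rw [prod_ite_exp]
    have h1 : (1 : ℝ) ≤ Real.exp (-(s * τ)) * Real.exp (s * (deg (graphOf ω) v)) := by
      rw [← Real.exp_add]
      refine Real.one_le_exp ?_
      have := mul_le_mul_of_nonneg_left hτd.le hs0.le
      nlinarith
    calc wt p ω = wt p ω * 1 := (mul_one _).symm
      _ ≤ wt p ω * (Real.exp (-(s * τ)) * Real.exp (s * (deg (graphOf ω) v))) :=
          mul_le_mul_of_nonneg_left h1 (wt_nonneg hp0 hp1 ω)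
      _ = Real.exp (-(s * τ)) * (wt p ω * Real.exp (s * (deg (graphOf ω) v))) := by ring
  have step2 : ∑ ω ∈ Finset.univ.filter (fun ω : Sym2 (Fin n) → Bool =>
        τ < (deg (graphOf ω) v : ℝ)),
        Real.exp (-(s * τ)) *
          (wt p ω * ∏ w ∈ Finset.univ.erase v, (if ω s(v, w) then Real.exp s else 1))
      ≤ Real.exp (-(s * τ)) * (1 - p + p * Real.exp s) ^ (n - 1) := by
    rw [← Finset.mul_sum, ← mgf p (Real.exp s) v]
    refine mul_le_mul_of_nonneg_left ?_ (Real.exp_pos _).le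
    exact Finset.sum_le_sum_of_subset_of_nonneg (Finset.filter_subset _ _)
      (fun ω _ _ => hprod_nonneg ω)
  have step3 : (1 - p + p * Real.exp s) ^ (n - 1) ≤ Real.exp (n * p * (Real.exp s - 1)) := by
    have hb : 1 - p + p * Real.exp s ≤ Real.exp (p * (Real.exp s - 1)) := by
      have := Real.add_one_le_exp (p * (Real.exp s - 1))
      linarith
    have hbase : (0 : ℝ) ≤ 1 - p + p * Real.exp s := by
      have h1 : 1 ≤ Real.exp s := Real.one_le_exp hs0.le
      nlinarith
    calc (1 - p + p * Real.exp s) ^ (n - 1)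
        ≤ Real.exp (p * (Real.exp s - 1)) ^ (n - 1) := pow_le_pow_left₀ hbase hb _
      _ = Real.exp ((n - 1 : ℕ) * (p * (Real.exp s - 1))) := (Real.exp_nat_mul _ _).symm
      _ ≤ Real.exp (n * p * (Real.exp s - 1)) := by
          refine Real.exp_le_exp.mpr ?_
          have hc : ((n - 1 : ℕ) : ℝ) ≤ (n : ℝ) := by
            exact_mod_cast Nat.cast_le.mpr (Nat.sub_le n 1)
          have hx : 0 ≤ p * (Real.exp s - 1) := by
            have h1 : 1 ≤ Real.exp s := Real.one_le_exp hs0.le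
            nlinarith
          nlinarith
  have step5 : Real.exp (-(s * τ)) * Real.exp (n * p * (Real.exp s - 1))
      ≤ Real.exp (-(ε ^ 2) * (n * p) / 3) := by
    rw [← Real.exp_add]
    refine Real.exp_le_exp.mpr ?_
    have hk := key_ineq ε hε0 hε1
    have := mul_le_mul_of_nonneg_left hk hnp0
    rw [hτ, hs]
    nlinarith [mul_le_mul_of_nonneg_left hk hnp0]
  calc ∑ ω ∈ Finset.univ.filter (fun ω : Sym2 (Fin n) → Bool =>
        (1 + ε) * (n * p) < (deg (graphOf ω) v : ℝ)), wt p ω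
      ≤ Real.exp (-(s * τ)) * (1 - p + p * Real.exp s) ^ (n - 1) := le_trans step1 step2
    _ ≤ Real.exp (-(s * τ)) * Real.exp (n * p * (Real.exp s - 1)) :=
        mul_le_mul_of_nonneg_left step3 (Real.exp_pos _).le
    _ ≤ Real.exp (-(ε ^ 2) * (n * p) / 3) := step5

lemma deg_le_pred {n : ℕ} (G : SimpleGraph (Fin n)) (v : Fin n) :
    (deg G v : ℝ) ≤ (n : ℝ) - 1 := by
  have h1 : deg G v ≤ n - 1 := by
    have hsub : (Finset.univ.filter fun w => G.Adj v w) ⊆ Finset.univ.erase v := by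
      intro w hw
      exact Finset.mem_erase.mpr ⟨(Finset.mem_filter.mp hw).2.ne', Finset.mem_univ w⟩
    calc deg G v ≤ (Finset.univ.erase v).card := Finset.card_le_card hsub
      _ = n - 1 := by rw [Finset.card_erase_of_mem (Finset.mem_univ v),
          Finset.card_univ, Fintype.card_fin]
  have hn1 : 1 ≤ n := v.pos
  calc (deg G v : ℝ) ≤ ((n - 1 : ℕ) : ℝ) := by exact_mod_cast h1
    _ = (n : ℝ) - 1 := by rw [Nat.cast_sub hn1]; norm_num

lemma exp_count (p τ : ℝ) :
    ∑ ω : Sym2 (Fin n) → Bool, wt p ω *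
        ((Finset.univ.filter fun v : Fin n => τ < (deg (graphOf ω) v : ℝ)).card : ℝ)
      = ∑ v : Fin n, ∑ ω ∈ Finset.univ.filter (fun ω : Sym2 (Fin n) → Bool =>
          τ < (deg (graphOf ω) v : ℝ)), wt p ω := by
  classical
  have hcard : ∀ ω : Sym2 (Fin n) → Bool,
      ((Finset.univ.filter fun v : Fin n => τ < (deg (graphOf ω) v : ℝ)).card : ℝ)
        = ∑ v : Fin n, if τ < (deg (graphOf ω) v : ℝ) then (1 : ℝ) else 0 := by
    intro ω
    rw [Finset.card_filter]
    push_cast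
    rfl
  simp_rw [hcard, Finset.mul_sum]
  rw [Finset.sum_comm]
  refine Finset.sum_congr rfl fun v _ => ?_
  rw [Finset.sum_filter]
  refine Finset.sum_congr rfl fun ω _ => ?_
  split <;> simp

lemma gnp_bound (ε c : ℝ) (hε0 : 0 < ε) (hε1 : ε < 1) (hc : 1 ≤ c) {n : ℕ} (hn : 2 ≤ n) :
    1 - (n : ℝ) ^ (-(ε ^ 2 / 12)) ≤ gnp n (c * Real.log n / n) (fun G =>
        ((Finset.univ.filter fun v : Fin n =>
            (1 + ε) * ((n : ℝ) * (c * Real.log n / n)) < (deg G v : ℝ)).card : ℝ)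
          ≤ (n : ℝ) ^ (1 - ε ^ 2 * c / 4))
    ∧ gnp n (c * Real.log n / n) (fun G =>
        ((Finset.univ.filter fun v : Fin n =>
            (1 + ε) * ((n : ℝ) * (c * Real.log n / n)) < (deg G v : ℝ)).card : ℝ)
          ≤ (n : ℝ) ^ (1 - ε ^ 2 * c / 4)) ≤ 1 := by
  classical
  set p : ℝ := c * Real.log n / n with hpdef
  have hn0 : (0 : ℝ) < n := by positivity
  have hn1 : (1 : ℝ) ≤ n := by exact_mod_cast Nat.one_le_of_lt hn
  have hlog : 0 ≤ Real.log n := Real.log_nonneg hn1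
  have hc0 : 0 < c := lt_of_lt_of_le one_pos hc
  have hp0 : 0 ≤ p := by rw [hpdef]; positivity
  have hnp : (n : ℝ) * p = c * Real.log n := by
    rw [hpdef]; field_simp
  have hB0 : (0 : ℝ) < (n : ℝ) ^ (1 - ε ^ 2 * c / 4) := Real.rpow_pos_of_pos hn0 _
  have hrpow0 : (0 : ℝ) ≤ (n : ℝ) ^ (-(ε ^ 2 / 12)) := Real.rpow_nonneg hn0.le _
  have hnpτ : (n : ℝ) * p ≤ (1 + ε) * ((n : ℝ) * p) := by
    nlinarith [mul_nonneg (Nat.cast_nonneg n : (0:ℝ) ≤ n) hp0]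
  by_cases hcase : (n : ℝ) - 1 ≤ (1 + ε) * ((n : ℝ) * p)
  · have hfull : (Finset.univ.filter (fun ω : Sym2 (Fin n) → Bool =>
        ((Finset.univ.filter fun v : Fin n =>
            (1 + ε) * ((n : ℝ) * p) < (deg (graphOf ω) v : ℝ)).card : ℝ)
          ≤ (n : ℝ) ^ (1 - ε ^ 2 * c / 4))) = Finset.univ := by
      refine Finset.filter_true_of_mem fun ω _ => ?_
      have hempty : (Finset.univ.filter fun v : Fin n =>
          (1 + ε) * ((n : ℝ) * p) < (deg (graphOf ω) v : ℝ)) = ∅ := by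
        refine Finset.filter_eq_empty_iff.mpr fun v _ => ?_
        push_neg
        exact le_trans (deg_le_pred _ v) hcase
      rw [hempty]
      simpa using hB0.le
    constructor
    · rw [gnp, hfull, sum_wt]; linarith
    · rw [gnp, hfull, sum_wt]
  · push_neg at hcase
    have hp1 : p ≤ 1 := by
      have hnpn : (n : ℝ) * p < (n : ℝ) * 1 := by rw [mul_one]; linarith
      exact ((mul_lt_mul_iff_right₀ hn0).mp hnpn).le
    have hupper : gnp n p (fun G =>
        ((Finset.univ.filter fun v : Fin n =>
            (1 + ε) * ((n : ℝ) * p) < (deg G v : ℝ)).card : ℝ)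
          ≤ (n : ℝ) ^ (1 - ε ^ 2 * c / 4)) ≤ 1 := by
      rw [gnp, ← sum_wt (n := n) p]
      exact Finset.sum_le_sum_of_subset_of_nonneg (Finset.filter_subset _ _)
        fun ω _ _ => wt_nonneg hp0 hp1 ω
    have hsplit : gnp n p (fun G =>
        ((Finset.univ.filter fun v : Fin n =>
            (1 + ε) * ((n : ℝ) * p) < (deg G v : ℝ)).card : ℝ)
          ≤ (n : ℝ) ^ (1 - ε ^ 2 * c / 4))
        + ∑ ω ∈ Finset.univ.filter (fun ω : Sym2 (Fin n) → Bool =>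
            ¬ (((Finset.univ.filter fun v : Fin n =>
              (1 + ε) * ((n : ℝ) * p) < (deg (graphOf ω) v : ℝ)).card : ℝ)
              ≤ (n : ℝ) ^ (1 - ε ^ 2 * c / 4))), wt p ω = 1 := by
      rw [gnp, ← sum_wt (n := n) p]
      exact Finset.sum_filter_add_sum_filter_not _ _ _
    have hcompl : ∑ ω ∈ Finset.univ.filter (fun ω : Sym2 (Fin n) → Bool =>
            ¬ (((Finset.univ.filter fun v : Fin n =>
              (1 + ε) * ((n : ℝ) * p) < (deg (graphOf ω) v : ℝ)).card : ℝ)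
              ≤ (n : ℝ) ^ (1 - ε ^ 2 * c / 4))), wt p ω
        ≤ (n : ℝ) ^ (-(ε ^ 2 / 12)) := by
      have hcount_nonneg : ∀ ω : Sym2 (Fin n) → Bool, (0 : ℝ) ≤ wt p ω *
          ((Finset.univ.filter fun v : Fin n =>
            (1 + ε) * ((n : ℝ) * p) < (deg (graphOf ω) v : ℝ)).card : ℝ) :=
        fun ω => mul_nonneg (wt_nonneg hp0 hp1 ω) (Nat.cast_nonneg _)
      have h1 : ∑ ω ∈ Finset.univ.filter (fun ω : Sym2 (Fin n) → Bool =>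
            ¬ (((Finset.univ.filter fun v : Fin n =>
              (1 + ε) * ((n : ℝ) * p) < (deg (graphOf ω) v : ℝ)).card : ℝ)
              ≤ (n : ℝ) ^ (1 - ε ^ 2 * c / 4))), wt p ω
          ≤ (∑ ω : Sym2 (Fin n) → Bool, wt p ω *
              ((Finset.univ.filter fun v : Fin n =>
                (1 + ε) * ((n : ℝ) * p) < (deg (graphOf ω) v : ℝ)).card : ℝ))
            / (n : ℝ) ^ (1 - ε ^ 2 * c / 4) := by
        rw [Finset.sum_div]
        calc ∑ ω ∈ Finset.univ.filter (fun ω : Sym2 (Fin n) → Bool =>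
              ¬ (((Finset.univ.filter fun v : Fin n =>
                (1 + ε) * ((n : ℝ) * p) < (deg (graphOf ω) v : ℝ)).card : ℝ)
                ≤ (n : ℝ) ^ (1 - ε ^ 2 * c / 4))), wt p ω
            ≤ ∑ ω ∈ Finset.univ.filter (fun ω : Sym2 (Fin n) → Bool =>
              ¬ (((Finset.univ.filter fun v : Fin n =>
                (1 + ε) * ((n : ℝ) * p) < (deg (graphOf ω) v : ℝ)).card : ℝ)
                ≤ (n : ℝ) ^ (1 - ε ^ 2 * c / 4))),
                wt p ω * ((Finset.univ.filter fun v : Fin n =>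
                  (1 + ε) * ((n : ℝ) * p) < (deg (graphOf ω) v : ℝ)).card : ℝ)
                  / (n : ℝ) ^ (1 - ε ^ 2 * c / 4) := by
              refine Finset.sum_le_sum fun ω hω => ?_
              have hBlt := (Finset.mem_filter.mp hω).2
              push_neg at hBlt
              have h1le : (1 : ℝ) ≤ ((Finset.univ.filter fun v : Fin n =>
                  (1 + ε) * ((n : ℝ) * p) < (deg (graphOf ω) v : ℝ)).card : ℝ)
                  / (n : ℝ) ^ (1 - ε ^ 2 * c / 4) :=
                (one_le_div hB0).mpr hBlt.le
              calc wt p ω = wt p ω * 1 := (mul_one _).symm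
                _ ≤ wt p ω * (((Finset.univ.filter fun v : Fin n =>
                    (1 + ε) * ((n : ℝ) * p) < (deg (graphOf ω) v : ℝ)).card : ℝ)
                    / (n : ℝ) ^ (1 - ε ^ 2 * c / 4)) :=
                  mul_le_mul_of_nonneg_left h1le (wt_nonneg hp0 hp1 ω)
                _ = wt p ω * ((Finset.univ.filter fun v : Fin n =>
                    (1 + ε) * ((n : ℝ) * p) < (deg (graphOf ω) v : ℝ)).card : ℝ)
                    / (n : ℝ) ^ (1 - ε ^ 2 * c / 4) := by ring
          _ ≤ ∑ ω : Sym2 (Fin n) → Bool, wt p ω *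
                ((Finset.univ.filter fun v : Fin n =>
                  (1 + ε) * ((n : ℝ) * p) < (deg (graphOf ω) v : ℝ)).card : ℝ)
                  / (n : ℝ) ^ (1 - ε ^ 2 * c / 4) := by
              refine Finset.sum_le_sum_of_subset_of_nonneg (Finset.filter_subset _ _)
                fun ω _ _ => ?_
              exact div_nonneg (hcount_nonneg ω) hB0.le
      have h2 : ∑ ω : Sym2 (Fin n) → Bool, wt p ω *
          ((Finset.univ.filter fun v : Fin n =>
            (1 + ε) * ((n : ℝ) * p) < (deg (graphOf ω) v : ℝ)).card : ℝ)
          ≤ (n : ℝ) ^ (1 - ε ^ 2 * c / 3 : ℝ) := by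
        rw [exp_count]
        have htail : ∀ v : Fin n, ∑ ω ∈ Finset.univ.filter (fun ω : Sym2 (Fin n) → Bool =>
            (1 + ε) * ((n : ℝ) * p) < (deg (graphOf ω) v : ℝ)), wt p ω
            ≤ (n : ℝ) ^ (-(ε ^ 2 * c / 3) : ℝ) := by
          intro v
          refine le_trans (tail p ε hp0 hp1 hε0 hε1 v) ?_
          rw [Real.rpow_def_of_pos hn0]
          refine Real.exp_le_exp.mpr (le_of_eq ?_)
          rw [hnp]; ring
        calc ∑ v : Fin n, ∑ ω ∈ Finset.univ.filter (fun ω : Sym2 (Fin n) → Bool =>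
              (1 + ε) * ((n : ℝ) * p) < (deg (graphOf ω) v : ℝ)), wt p ω
            ≤ ∑ _v : Fin n, (n : ℝ) ^ (-(ε ^ 2 * c / 3) : ℝ) :=
              Finset.sum_le_sum fun v _ => htail v
          _ = (n : ℝ) * (n : ℝ) ^ (-(ε ^ 2 * c / 3) : ℝ) := by
              rw [Finset.sum_const, Finset.card_univ, Fintype.card_fin, nsmul_eq_mul]
          _ = (n : ℝ) ^ (1 - ε ^ 2 * c / 3 : ℝ) := by
              rw [show (1 - ε ^ 2 * c / 3 : ℝ) = 1 + -(ε ^ 2 * c / 3) by ring,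
                Real.rpow_add hn0, Real.rpow_one]
      calc ∑ ω ∈ Finset.univ.filter (fun ω : Sym2 (Fin n) → Bool =>
            ¬ (((Finset.univ.filter fun v : Fin n =>
              (1 + ε) * ((n : ℝ) * p) < (deg (graphOf ω) v : ℝ)).card : ℝ)
              ≤ (n : ℝ) ^ (1 - ε ^ 2 * c / 4))), wt p ω
          ≤ (∑ ω : Sym2 (Fin n) → Bool, wt p ω *
              ((Finset.univ.filter fun v : Fin n =>
                (1 + ε) * ((n : ℝ) * p) < (deg (graphOf ω) v : ℝ)).card : ℝ))
            / (n : ℝ) ^ (1 - ε ^ 2 * c / 4) := h1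
        _ ≤ (n : ℝ) ^ (1 - ε ^ 2 * c / 3 : ℝ) / (n : ℝ) ^ (1 - ε ^ 2 * c / 4) := by
            gcongr
        _ = (n : ℝ) ^ (-(ε ^ 2 * c / 12) : ℝ) := by
            rw [← Real.rpow_sub hn0]
            congr 1
            ring
        _ ≤ (n : ℝ) ^ (-(ε ^ 2 / 12)) := by
            refine Real.rpow_le_rpow_of_exponent_le hn1 ?_
            nlinarith
    refine ⟨?_, hupper⟩
    linarith

end CFP


/-- For fixed `0 < ε < 1` and `G ~ G_{n,p}` with `p = c log n / n`,
`c = c(n) ≥ 1`, `(c-1) log n → ∞`, whp at most `n^{1-ε²c/4}` vertices have degree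
more than `(1+ε) n p`. -/
theorem gnp_few_high_degree_vertices (ε : ℝ) (hε0 : 0 < ε) (hε1 : ε < 1)
    (c : ℕ → ℝ) (hc : ∀ n, 1 ≤ c n)
    (hgrow : Filter.Tendsto (fun n : ℕ => (c n - 1) * Real.log n) Filter.atTop Filter.atTop) :
    Filter.Tendsto (fun n : ℕ =>
      CF.gnp n (c n * Real.log n / n) (fun G =>
        ((Finset.univ.filter fun v : Fin n =>
            (1 + ε) * ((n : ℝ) * (c n * Real.log n / n)) < (CF.deg G v : ℝ)).card : ℝ)
          ≤ (n : ℝ) ^ (1 - ε ^ 2 * c n / 4)))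
      Filter.atTop (nhds 1) := by
  have h0 : Filter.Tendsto (fun m : ℕ => ((m : ℝ)) ^ (-(ε ^ 2 / 12)))
      Filter.atTop (nhds 0) :=
    (tendsto_rpow_neg_atTop (by positivity)).comp tendsto_natCast_atTop_atTop
  have hlow : Filter.Tendsto (fun m : ℕ => 1 - (m : ℝ) ^ (-(ε ^ 2 / 12)))
      Filter.atTop (nhds 1) := by
    simpa using h0.const_sub 1
  refine tendsto_of_tendsto_of_tendsto_of_le_of_le' hlow tendsto_const_nhds ?_ ?_
  · filter_upwards [Filter.eventually_ge_atTop 2] with m hm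
    exact (CFP.gnp_bound ε (c m) hε0 hε1 (hc m) hm).1
  · filter_upwards [Filter.eventually_ge_atTop 2] with m hm
    exact (CFP.gnp_bound ε (c m) hε0 hε1 (hc m) hm).2
end
end

section
/- Let G be a connected graph on n vertices and let np denote a parameter such that every vertex of G has degree at most 4·np and at most one neighbor of degree less than np/100, and every vertex has degree at least 1. Then for every vertex v, 1 ≤ Ψ(v) ≤ 401, and consequently the stationary distribution satisfies 1/(401·n) ≤ π(v) ≤ 401/n for every vertex v. Moreover, for any ε ∈ (0,1), if u is a vertex such that u and all of its neighbors have degree in the interval ((1−ε)·np, (1+ε)·np), then 1 ≤ Ψ(u) ≤ (1+ε)/(1−ε). -/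
open Filter
open scoped BigOperators Classical

noncomputable section

set_option linter.unusedSectionVars false

namespace CFAux

open Finset

variable {V : Type*} [Fintype V] [DecidableEq V]

lemma Psi_eq (G : SimpleGraph V) (v : V) :
    CF.Psi G v = ∑ w ∈ Finset.univ.filter (fun w => G.Adj v w),
      ((min (CF.deg G v) (CF.deg G w) : ℕ) : ℝ)⁻¹ := by
  rw [CF.Psi, Finset.sum_filter]
  simp [CF.psi]

lemma card_nbr (G : SimpleGraph V) (v : V) :
    (Finset.univ.filter (fun w => G.Adj v w)).card = CF.deg G v := rfl

lemma min_pos (G : SimpleGraph V) (hmin : ∀ v : V, 1 ≤ CF.deg G v) (v w : V) :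
    (0 : ℝ) < ((min (CF.deg G v) (CF.deg G w) : ℕ) : ℝ) := by
  have : 1 ≤ min (CF.deg G v) (CF.deg G w) := le_min (hmin v) (hmin w)
  exact_mod_cast this

lemma one_le_Psi (G : SimpleGraph V) (hmin : ∀ v : V, 1 ≤ CF.deg G v) (v : V) :
    1 ≤ CF.Psi G v := by
  rw [Psi_eq]
  have hd : (0:ℝ) < (CF.deg G v : ℝ) := by exact_mod_cast hmin v
  have hsum := Finset.card_nsmul_le_sum (Finset.univ.filter (fun w => G.Adj v w))
    (fun w => ((min (CF.deg G v) (CF.deg G w) : ℕ) : ℝ)⁻¹) ((CF.deg G v : ℝ))⁻¹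
    (fun w _ => by
      apply inv_anti₀ (min_pos G hmin v w)
      exact_mod_cast min_le_left _ _)
  rw [card_nbr, nsmul_eq_mul, mul_inv_cancel₀ hd.ne'] at hsum
  exact hsum

end CFAux
/-- If every vertex of a connected graph `G` on `n` vertices has
degree at most `4np`, at most one neighbour of degree `< np/100`, and degree at least 1,
then `1 ≤ Ψ(v) ≤ 401` and `1/(401 n) ≤ π(v) ≤ 401/n` for all `v`; moreover for
`ε ∈ (0,1)`, if `u` and all its neighbours have degrees in `((1-ε)np, (1+ε)np)` then
`1 ≤ Ψ(u) ≤ (1+ε)/(1-ε)`. -/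
theorem psi_and_stationary_bounds
    {V : Type*} [Fintype V] [DecidableEq V] (n : ℕ) (hn : Fintype.card V = n)
    (G : SimpleGraph V) (hconn : G.Connected) (np : ℝ)
    (hmax : ∀ v : V, (CF.deg G v : ℝ) ≤ 4 * np)
    (hlow : ∀ v : V,
      (Finset.univ.filter fun w => G.Adj v w ∧ (CF.deg G w : ℝ) < np / 100).card ≤ 1)
    (hmin : ∀ v : V, 1 ≤ CF.deg G v) :
    (∀ v : V, 1 ≤ CF.Psi G v ∧ CF.Psi G v ≤ 401) ∧
    (∀ v : V, 1 / (401 * (n : ℝ)) ≤ CF.statPi G v ∧ CF.statPi G v ≤ 401 / (n : ℝ)) ∧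
    (∀ ε : ℝ, 0 < ε → ε < 1 → ∀ u : V,
      ((1 - ε) * np < (CF.deg G u : ℝ) ∧ (CF.deg G u : ℝ) < (1 + ε) * np ∧
        ∀ w : V, G.Adj u w →
          (1 - ε) * np < (CF.deg G w : ℝ) ∧ (CF.deg G w : ℝ) < (1 + ε) * np) →
      1 ≤ CF.Psi G u ∧ CF.Psi G u ≤ (1 + ε) / (1 - ε)) := by
  classical
  obtain ⟨v0⟩ := hconn.nonempty
  have hnp : (0:ℝ) < np := by
    have h1 : (1:ℝ) ≤ (CF.deg G v0 : ℝ) := by exact_mod_cast hmin v0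
    linarith [hmax v0]
  -- upper bound on Psi
  have hPsiUB : ∀ v : V, CF.Psi G v ≤ 401 := by
    intro v
    rw [CFAux.Psi_eq]
    have hdv : (0:ℝ) < (CF.deg G v : ℝ) := by exact_mod_cast hmin v
    set N := Finset.univ.filter (fun w => G.Adj v w) with hN
    set f : V → ℝ := fun w => ((min (CF.deg G v) (CF.deg G w) : ℕ) : ℝ)⁻¹ with hf
    set p : V → Prop := fun w => (CF.deg G w : ℝ) < np / 100 with hp
    have hsplit := Finset.sum_filter_add_sum_filter_not N p f
    -- low-degree neighbours contribute at most 1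
    have hlowcard : (N.filter p).card ≤ 1 := by
      have heq : N.filter p
          = Finset.univ.filter (fun w => G.Adj v w ∧ (CF.deg G w : ℝ) < np / 100) := by
        rw [hN, Finset.filter_filter]
      rw [heq]; exact hlow v
    have hterm1 : ∀ w ∈ N.filter p, f w ≤ 1 := by
      intro w _
      have hone : (1:ℝ) ≤ ((min (CF.deg G v) (CF.deg G w) : ℕ) : ℝ) := by
        have : 1 ≤ min (CF.deg G v) (CF.deg G w) := le_min (hmin v) (hmin w)
        exact_mod_cast this
      have hfw : f w = ((min (CF.deg G v) (CF.deg G w) : ℕ) : ℝ)⁻¹ := rfl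
      rw [hfw, ← inv_one]
      exact inv_anti₀ zero_lt_one hone
    have hlowsum : ∑ w ∈ N.filter p, f w ≤ 1 := by
      calc ∑ w ∈ N.filter p, f w ≤ (N.filter p).card • (1:ℝ) :=
            Finset.sum_le_card_nsmul _ _ 1 hterm1
        _ = ((N.filter p).card : ℝ) := by simp
        _ ≤ 1 := by exact_mod_cast hlowcard
    -- high-degree neighbours contribute at most 400
    set M : ℝ := max ((CF.deg G v : ℝ))⁻¹ (100 / np) with hM
    have hM0 : 0 ≤ M := le_trans (inv_nonneg.mpr hdv.le) (le_max_left _ _)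
    have htermM : ∀ w ∈ N.filter (fun w => ¬ p w), f w ≤ M := by
      intro w hw
      rcases Finset.mem_filter.mp hw with ⟨_, hnot⟩
      have hge : np / 100 ≤ (CF.deg G w : ℝ) := not_lt.mp hnot
      rcases le_total (CF.deg G v) (CF.deg G w) with h | h
      · have : f w = ((CF.deg G v : ℝ))⁻¹ := by rw [hf]; simp [min_eq_left h]
        rw [this]; exact le_max_left _ _
      · have heq : f w = ((CF.deg G w : ℝ))⁻¹ := by rw [hf]; simp [min_eq_right h]
        have h100 : (0:ℝ) < np / 100 := by positivity
        have : ((CF.deg G w : ℝ))⁻¹ ≤ (np / 100)⁻¹ := inv_anti₀ h100 hge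
        rw [heq]
        refine le_trans this (le_trans (le_of_eq ?_) (le_max_right _ _))
        rw [inv_div]
    have hhighsum : ∑ w ∈ N.filter (fun w => ¬ p w), f w ≤ 400 := by
      have hc : ((N.filter (fun w => ¬ p w)).card : ℝ) ≤ (CF.deg G v : ℝ) := by
        have := Finset.card_filter_le N (fun w => ¬ p w)
        rw [CFAux.card_nbr] at this
        exact_mod_cast this
      calc ∑ w ∈ N.filter (fun w => ¬ p w), f w
          ≤ (N.filter (fun w => ¬ p w)).card • M :=
            Finset.sum_le_card_nsmul _ _ M htermM
        _ = ((N.filter (fun w => ¬ p w)).card : ℝ) * M := by rw [nsmul_eq_mul]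
        _ ≤ (CF.deg G v : ℝ) * M := mul_le_mul_of_nonneg_right hc hM0
        _ ≤ 400 := by
            rcases max_cases ((CF.deg G v : ℝ))⁻¹ (100 / np) with ⟨he, _⟩ | ⟨he, _⟩
            · rw [hM, he, mul_inv_cancel₀ hdv.ne']; norm_num
            · rw [hM, he, ← mul_div_assoc, div_le_iff₀ hnp]
              nlinarith [hmax v]
    calc ∑ w ∈ N, f w
        = ∑ w ∈ N.filter p, f w + ∑ w ∈ N.filter (fun w => ¬ p w), f w := hsplit.symm
      _ ≤ 1 + 400 := add_le_add hlowsum hhighsum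
      _ = 401 := by norm_num
  have hPsiLB := CFAux.one_le_Psi G hmin
  refine ⟨fun v => ⟨hPsiLB v, hPsiUB v⟩, ?_, ?_⟩
  · -- stationary distribution bounds
    have hnpos : 0 < n := hn ▸ (Fintype.card_pos_iff.mpr ⟨v0⟩)
    have hnR : (0:ℝ) < (n : ℝ) := by exact_mod_cast hnpos
    have hcard : ((Finset.univ : Finset V).card : ℝ) = (n : ℝ) := by
      rw [Finset.card_univ, hn]
    have hSlb : (n : ℝ) ≤ ∑ u, CF.Psi G u := by
      calc (n:ℝ) = ∑ _u : V, (1:ℝ) := by rw [Finset.sum_const, nsmul_eq_mul, hcard, mul_one]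
        _ ≤ ∑ u, CF.Psi G u := Finset.sum_le_sum (fun u _ => hPsiLB u)
    have hSub : ∑ u, CF.Psi G u ≤ 401 * (n : ℝ) := by
      calc ∑ u, CF.Psi G u ≤ ∑ _u : V, (401:ℝ) := Finset.sum_le_sum (fun u _ => hPsiUB u)
        _ = 401 * (n:ℝ) := by rw [Finset.sum_const, nsmul_eq_mul, hcard, mul_comm]
    have hS : (0:ℝ) < ∑ u, CF.Psi G u := lt_of_lt_of_le hnR hSlb
    intro v
    constructor
    · exact div_le_div₀ (le_trans zero_le_one (hPsiLB v)) (hPsiLB v) hS hSub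
    · exact div_le_div₀ (by norm_num) (hPsiUB v) hnR hSlb
  · -- the ε-regular bound
    intro ε hε0 hε1 u ⟨hul, huu, hnbr⟩
    refine ⟨hPsiLB u, ?_⟩
    rw [CFAux.Psi_eq]
    have h1ε : (0:ℝ) < 1 - ε := by linarith
    have hb : (0:ℝ) < (1 - ε) * np := mul_pos h1ε hnp
    have hterm : ∀ w ∈ Finset.univ.filter (fun w => G.Adj u w),
        ((min (CF.deg G u) (CF.deg G w) : ℕ) : ℝ)⁻¹ ≤ ((1 - ε) * np)⁻¹ := by
      intro w hw
      have hadj : G.Adj u w := (Finset.mem_filter.mp hw).2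
      apply inv_anti₀ hb
      have h1 : (1 - ε) * np ≤ (CF.deg G u : ℝ) := hul.le
      have h2 : (1 - ε) * np ≤ (CF.deg G w : ℝ) := (hnbr w hadj).1.le
      push_cast
      exact le_min h1 h2
    have hdu : (0:ℝ) ≤ (CF.deg G u : ℝ) := Nat.cast_nonneg _
    calc ∑ w ∈ Finset.univ.filter (fun w => G.Adj u w),
          ((min (CF.deg G u) (CF.deg G w) : ℕ) : ℝ)⁻¹
        ≤ (Finset.univ.filter (fun w => G.Adj u w)).card • ((1 - ε) * np)⁻¹ :=
          Finset.sum_le_card_nsmul _ _ _ hterm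
      _ = (CF.deg G u : ℝ) * ((1 - ε) * np)⁻¹ := by rw [CFAux.card_nbr, nsmul_eq_mul]
      _ ≤ ((1 + ε) * np) * ((1 - ε) * np)⁻¹ :=
          mul_le_mul_of_nonneg_right huu.le (inv_nonneg.mpr hb.le)
      _ = (1 + ε) / (1 - ε) := by
          field_simp
end
end

section
/- Let G be a connected graph and let u ≠ v be two non-adjacent vertices at graph distance greater than 2 (so u and v have no common neighbor), such that every neighbor x of u satisfies d(x) ≤ d(u) and every neighbor x of v satisfies d(x) ≤ d(v). Let Γ be the graph obtained from G by contracting u and v into a single vertex z (so z is adjacent in Γ exactly to N_G(u) ∪ N_G(v)). Then for every starting vertex w ∉ {u,v} and every t ≥ 0, the probability that the biased random walk on Γ started at w does not visit z during its first t steps equals the probability that the biased random walk on G started at w visits neither u nor v during its first t steps. -/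
open Filter
open scoped BigOperators Classical

noncomputable section

section Aux

variable {V : Type*} [Fintype V] [DecidableEq V]

private lemma contract_adj_iff (G : SimpleGraph V) (u v x y : V) :
    (CF.contract G u v).Adj x y ↔ x ≠ y ∧
      ((x ≠ v ∧ y ≠ v ∧ (G.Adj x y ∨ (x = u ∧ G.Adj v y))) ∨
       (y ≠ v ∧ x ≠ v ∧ (G.Adj y x ∨ (y = u ∧ G.Adj v x)))) := by
  simp [CF.contract, SimpleGraph.fromRel_adj]

private lemma contract_not_adj_v (G : SimpleGraph V) (u v x : V) :
    ¬ (CF.contract G u v).Adj x v := by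
  rw [contract_adj_iff]
  rintro ⟨-, ⟨-, h, -⟩ | ⟨h, -, -⟩⟩ <;> exact h rfl

private lemma contract_adj_off (G : SimpleGraph V) (u v : V) {x y : V}
    (hx : x ≠ u) (hx' : x ≠ v) (hy : y ≠ u) (hy' : y ≠ v) :
    (CF.contract G u v).Adj x y ↔ G.Adj x y := by
  rw [contract_adj_iff]
  constructor
  · rintro ⟨-, ⟨-, -, h | ⟨h, -⟩⟩ | ⟨-, -, h | ⟨h, -⟩⟩⟩
    · exact h
    · exact absurd h hx
    · exact h.symm
    · exact absurd h hy
  · intro h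
    exact ⟨h.ne, Or.inl ⟨hx', hy', Or.inl h⟩⟩

private lemma contract_adj_u (G : SimpleGraph V) {u v : V} (huv : u ≠ v)
    (hnadj : ¬ G.Adj u v) {x : V} (hx : x ≠ u) (hx' : x ≠ v) :
    (CF.contract G u v).Adj x u ↔ (G.Adj x u ∨ G.Adj v x) := by
  rw [contract_adj_iff]
  constructor
  · rintro ⟨-, ⟨-, -, h | ⟨h, -⟩⟩ | ⟨-, -, h | ⟨-, h⟩⟩⟩
    · exact Or.inl h
    · exact absurd h hx
    · exact Or.inl h.symm
    · exact Or.inr h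
  · rintro (h | h)
    · exact ⟨hx, Or.inl ⟨hx', huv, Or.inl h⟩⟩
    · exact ⟨hx, Or.inr ⟨huv, hx', Or.inr ⟨rfl, h⟩⟩⟩

private lemma contract_adj_from_u (G : SimpleGraph V) {u v : V} (huv : u ≠ v)
    (hnadj : ¬ G.Adj u v) (y : V) :
    (CF.contract G u v).Adj u y ↔ (G.Adj u y ∨ G.Adj v y) := by
  rw [contract_adj_iff]
  constructor
  · rintro ⟨hne, ⟨-, -, h | ⟨-, h⟩⟩ | ⟨-, -, h | ⟨hyu, h⟩⟩⟩
    · exact Or.inl h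
    · exact Or.inr h
    · exact Or.inl h.symm
    · exact absurd h.symm hnadj
  · rintro (h | h)
    · exact ⟨h.ne, Or.inl ⟨huv, fun hyv => hnadj (hyv ▸ h), Or.inl h⟩⟩
    · refine ⟨fun hyu => hnadj (hyu ▸ h).symm, Or.inl ⟨huv, h.ne', Or.inr ⟨rfl, h⟩⟩⟩

private lemma no_common (G : SimpleGraph V) {u v : V} (hdist : 2 < G.dist u v)
    (x : V) : ¬ (G.Adj u x ∧ G.Adj x v) := by
  rintro ⟨h1, h2⟩
  have hle := G.dist_le (h1.toWalk.append h2.toWalk)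
  have hlen : (h1.toWalk.append h2.toWalk).length = 2 := by
    simp [SimpleGraph.Adj.toWalk]
  omega

private lemma deg_contract_eq (G : SimpleGraph V) {u v : V} (huv : u ≠ v)
    (hnadj : ¬ G.Adj u v) (hcn : ∀ x, ¬ (G.Adj u x ∧ G.Adj x v))
    {x : V} (hx : x ≠ u) (hx' : x ≠ v) :
    CF.deg (CF.contract G u v) x = CF.deg G x := by
  unfold CF.deg
  refine (Finset.card_bij (fun y _ => if y = v then u else y) ?_ ?_ ?_).symm
  · intro a ha
    simp only [Finset.mem_filter, Finset.mem_univ, true_and] at ha ⊢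
    by_cases hav : a = v
    · subst hav
      simp only [if_pos rfl]
      exact (contract_adj_u G huv hnadj hx hx').mpr (Or.inr ha.symm)
    · rw [if_neg hav]
      by_cases hau : a = u
      · subst hau
        exact (contract_adj_u G huv hnadj hx hx').mpr (Or.inl ha)
      · exact (contract_adj_off G u v hx hx' hau hav).mpr ha
  · intro a₁ ha₁ a₂ ha₂ h
    simp only [Finset.mem_filter, Finset.mem_univ, true_and] at ha₁ ha₂
    by_cases h1 : a₁ = v <;> by_cases h2 : a₂ = v
    · rw [h1, h2]
    · rw [if_pos h1, if_neg h2] at h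
      subst h1
      subst h
      exact (hcn x ⟨ha₂.symm, ha₁⟩).elim
    · rw [if_neg h1, if_pos h2] at h
      subst h2
      subst h
      exact (hcn x ⟨ha₁.symm, ha₂⟩).elim
    · rwa [if_neg h1, if_neg h2] at h
  · intro b hb
    simp only [Finset.mem_filter, Finset.mem_univ, true_and] at hb
    have hbv : b ≠ v := fun h => contract_not_adj_v G u v x (h ▸ hb)
    by_cases hbu : b = u
    · rw [hbu] at hb ⊢
      rcases (contract_adj_u G huv hnadj hx hx').mp hb with h | h
      · exact ⟨u, by simpa [Finset.mem_filter] using h, if_neg huv⟩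
      · exact ⟨v, by simpa [Finset.mem_filter] using h.symm, if_pos rfl⟩
    · refine ⟨b, ?_, if_neg hbv⟩
      simpa [Finset.mem_filter] using (contract_adj_off G u v hx hx' hbu hbv).mp hb

private lemma deg_u_le_contract (G : SimpleGraph V) {u v : V} (huv : u ≠ v)
    (hnadj : ¬ G.Adj u v) :
    CF.deg G u ≤ CF.deg (CF.contract G u v) u := by
  unfold CF.deg
  apply Finset.card_le_card
  intro y hy
  simp only [Finset.mem_filter, Finset.mem_univ, true_and] at hy ⊢
  exact (contract_adj_from_u G huv hnadj y).mpr (Or.inl hy)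

private lemma deg_v_le_contract (G : SimpleGraph V) {u v : V} (huv : u ≠ v)
    (hnadj : ¬ G.Adj u v) :
    CF.deg G v ≤ CF.deg (CF.contract G u v) u := by
  unfold CF.deg
  apply Finset.card_le_card
  intro y hy
  simp only [Finset.mem_filter, Finset.mem_univ, true_and] at hy ⊢
  exact (contract_adj_from_u G huv hnadj y).mpr (Or.inr hy)

private lemma psi_contract_off (G : SimpleGraph V) {u v : V} (huv : u ≠ v)
    (hnadj : ¬ G.Adj u v) (hcn : ∀ x, ¬ (G.Adj u x ∧ G.Adj x v))
    {x y : V} (hx : x ≠ u) (hx' : x ≠ v) (hy : y ≠ u) (hy' : y ≠ v) :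
    CF.psi (CF.contract G u v) x y = CF.psi G x y := by
  unfold CF.psi
  rw [contract_adj_off G u v hx hx' hy hy',
    deg_contract_eq G huv hnadj hcn hx hx', deg_contract_eq G huv hnadj hcn hy hy']

private lemma Psi_contract_eq (G : SimpleGraph V) {u v : V} (huv : u ≠ v)
    (hnadj : ¬ G.Adj u v) (hcn : ∀ x, ¬ (G.Adj u x ∧ G.Adj x v))
    (hu : ∀ x : V, G.Adj u x → CF.deg G x ≤ CF.deg G u)
    (hv : ∀ x : V, G.Adj v x → CF.deg G x ≤ CF.deg G v)
    {x : V} (hx : x ≠ u) (hx' : x ≠ v) :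
    CF.Psi (CF.contract G u v) x = CF.Psi G x := by
  have hdegx := deg_contract_eq G huv hnadj hcn hx hx'
  unfold CF.Psi
  by_cases hau : G.Adj x u
  · -- x adjacent to u in G; then not adjacent to v
    have hav : ¬ G.Adj x v := fun h => hcn x ⟨hau.symm, h⟩
    refine Finset.sum_congr rfl fun y _ => ?_
    by_cases hyu : y = u
    · rw [hyu]
      unfold CF.psi
      rw [if_pos ((contract_adj_u G huv hnadj hx hx').mpr (Or.inl hau)), if_pos hau]
      have h1 : CF.deg G x ≤ CF.deg G u := hu x hau.symm
      have h2 : CF.deg G x ≤ CF.deg (CF.contract G u v) u :=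
        le_trans h1 (deg_u_le_contract G huv hnadj)
      rw [hdegx, min_eq_left h2, min_eq_left h1]
    · by_cases hyv : y = v
      · rw [hyv]
        unfold CF.psi
        rw [if_neg (contract_not_adj_v G u v x), if_neg hav]
      · exact psi_contract_off G huv hnadj hcn hx hx' hyu hyv
  · by_cases hav : G.Adj x v
    · -- x adjacent to v; reindex by swapping u and v
      refine Fintype.sum_equiv (Equiv.swap u v) _ _ fun y => ?_
      by_cases hyu : y = u
      · rw [hyu, Equiv.swap_apply_left]
        unfold CF.psi
        rw [if_pos ((contract_adj_u G huv hnadj hx hx').mpr (Or.inr hav.symm)),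
          if_pos hav]
        have h1 : CF.deg G x ≤ CF.deg G v := hv x hav.symm
        have h2 : CF.deg G x ≤ CF.deg (CF.contract G u v) u :=
          le_trans h1 (deg_v_le_contract G huv hnadj)
        rw [hdegx, min_eq_left h2, min_eq_left h1]
      · by_cases hyv : y = v
        · rw [hyv, Equiv.swap_apply_right]
          unfold CF.psi
          rw [if_neg (contract_not_adj_v G u v x), if_neg hau]
        · rw [Equiv.swap_apply_of_ne_of_ne hyu hyv]
          exact psi_contract_off G huv hnadj hcn hx hx' hyu hyv
    · refine Finset.sum_congr rfl fun y _ => ?_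
      by_cases hyu : y = u
      · rw [hyu]
        unfold CF.psi
        rw [if_neg, if_neg hau]
        rw [contract_adj_u G huv hnadj hx hx']
        rintro (h | h)
        · exact hau h
        · exact hav h.symm
      · by_cases hyv : y = v
        · rw [hyv]
          unfold CF.psi
          rw [if_neg (contract_not_adj_v G u v x), if_neg hav]
        · exact psi_contract_off G huv hnadj hcn hx hx' hyu hyv

private lemma step_contract_eq (G : SimpleGraph V) {u v : V} (huv : u ≠ v)
    (hnadj : ¬ G.Adj u v) (hcn : ∀ x, ¬ (G.Adj u x ∧ G.Adj x v))
    (hu : ∀ x : V, G.Adj u x → CF.deg G x ≤ CF.deg G u)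
    (hv : ∀ x : V, G.Adj v x → CF.deg G x ≤ CF.deg G v)
    {x y : V} (hx : x ≠ u) (hx' : x ≠ v) (hy : y ≠ u) (hy' : y ≠ v) :
    CF.step (CF.contract G u v) x y = CF.step G x y := by
  unfold CF.step
  rw [psi_contract_off G huv hnadj hcn hx hx' hy hy',
    Psi_contract_eq G huv hnadj hcn hu hv hx hx']

end Aux

/-- Let `u ≠ v` be non-adjacent vertices of a connected graph `G` at
distance `> 2`, each of maximal degree in its neighbourhood. Contracting `u` and `v` into
a single vertex `z` (represented here by `u`), for every start `w ∉ {u,v}` and every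
`t ≥ 0`, the probability that the biased walk on the contraction avoids `z` during its
first `t` steps equals the probability that the biased walk on `G` avoids both `u` and
`v` during its first `t` steps. -/
theorem contraction_avoidance_probability
    {V : Type*} [Fintype V] [DecidableEq V]
    (G : SimpleGraph V) (hG : G.Connected) (u v : V) (huv : u ≠ v)
    (hnadj : ¬ G.Adj u v) (hdist : 2 < G.dist u v)
    (hu : ∀ x : V, G.Adj u x → CF.deg G x ≤ CF.deg G u)
    (hv : ∀ x : V, G.Adj v x → CF.deg G x ≤ CF.deg G v)
    (w : V) (hwu : w ≠ u) (hwv : w ≠ v) (t : ℕ) :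
    CF.avoidProb (CF.contract G u v) w t {u} = CF.avoidProb G w t {u, v} := by
  classical
  have hcn : ∀ x, ¬ (G.Adj u x ∧ G.Adj x v) := no_common G hdist
  unfold CF.avoidProb
  have hsub : (Finset.univ.filter fun x : Fin (t + 1) → V =>
      x 0 = w ∧ ∀ i, x i ∉ ({u, v} : Finset V)) ⊆
      (Finset.univ.filter fun x : Fin (t + 1) → V =>
      x 0 = w ∧ ∀ i, x i ∉ ({u} : Finset V)) := by
    intro x hx
    simp only [Finset.mem_filter, Finset.mem_univ, true_and, Finset.mem_insert,
      Finset.mem_singleton, not_or] at hx ⊢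
    exact ⟨hx.1, fun i => (hx.2 i).1⟩
  rw [← Finset.sum_subset hsub ?_]
  · refine Finset.sum_congr rfl fun x hx => ?_
    simp only [Finset.mem_filter, Finset.mem_univ, true_and, Finset.mem_insert,
      Finset.mem_singleton, not_or] at hx
    unfold CF.trajProbP
    refine Finset.prod_congr rfl fun i _ => ?_
    exact step_contract_eq G huv hnadj hcn hu hv
      (hx.2 i.castSucc).1 (hx.2 i.castSucc).2 (hx.2 i.succ).1 (hx.2 i.succ).2
  · intro x hx1 hx2
    simp only [Finset.mem_filter, Finset.mem_univ, true_and] at hx1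
    have hmem : ¬ ∀ i, x i ∉ ({u, v} : Finset V) := fun hall =>
      hx2 (Finset.mem_filter.mpr ⟨Finset.mem_univ x, hx1.1, hall⟩)
    push_neg at hmem
    obtain ⟨i, hi⟩ := hmem
    have hiv : x i = v := by
      rcases Finset.mem_insert.mp hi with h | h
      · exact absurd (Finset.mem_singleton.mpr h) (hx1.2 i)
      · exact Finset.mem_singleton.mp h
    have hi0 : i ≠ 0 := fun h => hwv (by rw [h] at hiv; rw [← hx1.1, hiv])
    obtain ⟨j, hj⟩ := Fin.exists_succ_eq_of_ne_zero hi0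
    unfold CF.trajProbP
    apply Finset.prod_eq_zero (Finset.mem_univ j)
    rw [hj, hiv]
    unfold CF.step CF.psi
    rw [if_neg (contract_not_adj_v G u v _)]
    exact zero_div _
end
end

section
/- Let G be a connected graph and let u ≠ v be two non-adjacent vertices at graph distance greater than 2 (so u and v have no common neighbor), such that every neighbor x of u satisfies d(x) ≤ d(u) and every neighbor x of v satisfies d(x) ≤ d(v). Let Γ be the graph obtained from G by contracting u and v into a single vertex z. Then the stationary distribution of the biased random walk on Γ satisfies π_Γ(z) = π_G(u) + π_G(v), and π_Γ(x) = π_G(x) for every vertex x ∉ {u,v}. -/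
open Filter
open scoped BigOperators Classical

noncomputable section

section ContractionHelpers

variable {V : Type*} [Fintype V] [DecidableEq V]

lemma contract_adj' (G : SimpleGraph V) (u v x y : V) :
    (CF.contract G u v).Adj x y ↔
      x ≠ y ∧ x ≠ v ∧ y ≠ v ∧
        (G.Adj x y ∨ (x = u ∧ G.Adj v y) ∨ (y = u ∧ G.Adj v x)) := by
  unfold CF.contract
  rw [SimpleGraph.fromRel_adj]
  constructor
  · rintro ⟨hxy, ⟨hx, hy, h | h⟩ | ⟨hy, hx, h | h⟩⟩
    · exact ⟨hxy, hx, hy, Or.inl h⟩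
    · exact ⟨hxy, hx, hy, Or.inr (Or.inl h)⟩
    · exact ⟨hxy, hx, hy, Or.inl h.symm⟩
    · exact ⟨hxy, hx, hy, Or.inr (Or.inr h)⟩
  · rintro ⟨hxy, hx, hy, h | h | h⟩
    · exact ⟨hxy, Or.inl ⟨hx, hy, Or.inl h⟩⟩
    · exact ⟨hxy, Or.inl ⟨hx, hy, Or.inr h⟩⟩
    · exact ⟨hxy, Or.inr ⟨hy, hx, Or.inr h⟩⟩

end ContractionHelpers

/-- Let `u ≠ v` be non-adjacent vertices of a connected graph `G` at
distance `> 2`, each of maximal degree in its neighbourhood, and let `Γ` be the graph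
obtained by contracting `u` and `v` into a single vertex `z` (represented here by `u`).
Then the stationary distribution of the biased walk on `Γ` satisfies
`π_Γ(z) = π_G(u) + π_G(v)`, and `π_Γ(x) = π_G(x)` for every `x ∉ {u,v}`. -/
theorem contraction_stationary_distribution
    {V : Type*} [Fintype V] [DecidableEq V]
    (G : SimpleGraph V) (hG : G.Connected) (u v : V) (huv : u ≠ v)
    (hnadj : ¬ G.Adj u v) (hdist : 2 < G.dist u v)
    (hu : ∀ x : V, G.Adj u x → CF.deg G x ≤ CF.deg G u)
    (hv : ∀ x : V, G.Adj v x → CF.deg G x ≤ CF.deg G v) :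
    CF.statPi (CF.contract G u v) u = CF.statPi G u + CF.statPi G v ∧
    ∀ x : V, x ≠ u → x ≠ v → CF.statPi (CF.contract G u v) x = CF.statPi G x := by
  classical
  set Γ := CF.contract G u v with hΓdef
  -- no common neighbour
  have hcn : ∀ x : V, ¬ (G.Adj u x ∧ G.Adj v x) := by
    rintro x ⟨h1, h2⟩
    have hle := SimpleGraph.dist_le
      (SimpleGraph.Walk.cons h1 (SimpleGraph.Walk.cons h2.symm SimpleGraph.Walk.nil))
    simp at hle
    omega
  have hadj : ∀ x y, Γ.Adj x y ↔ x ≠ y ∧ x ≠ v ∧ y ≠ v ∧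
      (G.Adj x y ∨ (x = u ∧ G.Adj v y) ∨ (y = u ∧ G.Adj v x)) := contract_adj' G u v
  -- degrees
  have hdegu : CF.deg Γ u = CF.deg G u + CF.deg G v := by
    unfold CF.deg
    rw [← Finset.card_union_of_disjoint (by
      rw [Finset.disjoint_left]
      intro w hw1 hw2
      simp only [Finset.mem_filter, Finset.mem_univ, true_and] at hw1 hw2
      exact hcn w ⟨hw1, hw2⟩)]
    congr 1
    ext w
    simp only [Finset.mem_union, Finset.mem_filter, Finset.mem_univ, true_and, hadj]
    constructor
    · rintro ⟨hw, _, hwv, h | h | ⟨rfl, h⟩⟩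
      · exact Or.inl h
      · exact Or.inr h
      · exact absurd h.symm hnadj
    · rintro (h | h)
      · exact ⟨h.ne, huv, fun hwv => hnadj (hwv ▸ h), Or.inl h⟩
      · exact ⟨fun huw => hnadj (by subst huw; exact h.symm), huv, h.ne',
          Or.inr (Or.inl h)⟩
  have hdegv : CF.deg Γ v = 0 := by
    unfold CF.deg
    rw [Finset.card_eq_zero, Finset.filter_eq_empty_iff]
    intro w _
    rw [hadj]
    rintro ⟨_, hvv, _, _⟩
    exact hvv rfl
  have hdegx : ∀ x, x ≠ u → x ≠ v → CF.deg Γ x = CF.deg G x := by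
    intro x hxu hxv
    unfold CF.deg
    have himg : (Finset.univ.filter fun w => Γ.Adj x w)
        = (Finset.univ.filter fun w => G.Adj x w).image
            (fun w => if w = v then u else w) := by
      ext w
      simp only [Finset.mem_filter, Finset.mem_univ, true_and, Finset.mem_image, hadj]
      constructor
      · rintro ⟨hxw, _, hwv, h | ⟨h, _⟩ | ⟨rfl, h⟩⟩
        · exact ⟨w, h, if_neg hwv⟩
        · exact absurd h hxu
        · exact ⟨v, h.symm, if_pos rfl⟩
      · rintro ⟨a, ha, rfl⟩
        by_cases hav : a = v
        · rw [if_pos hav]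
          exact ⟨hxu, hxv, huv, Or.inr (Or.inr ⟨rfl, (hav ▸ ha).symm⟩)⟩
        · rw [if_neg hav]
          exact ⟨ha.ne, hxv, hav, Or.inl ha⟩
    rw [himg, Finset.card_image_of_injOn]
    intro a ha b hb hab
    dsimp only at hab
    simp only [Finset.mem_coe, Finset.mem_filter, Finset.mem_univ, true_and] at ha hb
    by_cases hav : a = v <;> by_cases hbv : b = v
    · rw [hav, hbv]
    · rw [if_pos hav, if_neg hbv] at hab
      exact absurd ⟨(hab ▸ hb).symm, (hav ▸ ha).symm⟩ (hcn x)
    · rw [if_neg hav, if_pos hbv] at hab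
      exact absurd ⟨(hab ▸ ha).symm, (hbv ▸ hb).symm⟩ (hcn x)
    · rwa [if_neg hav, if_neg hbv] at hab
  -- psi values
  have hpsi_v : ∀ w, CF.psi Γ v w = 0 := by
    intro w
    unfold CF.psi
    rw [if_neg]
    rw [hadj]
    rintro ⟨_, hvv, _, _⟩
    exact hvv rfl
  have hpsi_xv : ∀ x, CF.psi Γ x v = 0 := by
    intro x
    unfold CF.psi
    rw [if_neg]
    rw [hadj]
    rintro ⟨_, _, hvv, _⟩
    exact hvv rfl
  have hpsi_other : ∀ x w, x ≠ u → x ≠ v → w ≠ u → w ≠ v →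
      CF.psi Γ x w = CF.psi G x w := by
    intro x w hxu hxv hwu hwv
    have hiff : Γ.Adj x w ↔ G.Adj x w := by
      rw [hadj]
      constructor
      · rintro ⟨_, _, _, h | ⟨h, _⟩ | ⟨h, _⟩⟩
        · exact h
        · exact absurd h hxu
        · exact absurd h hwu
      · intro h
        exact ⟨h.ne, hxv, hwv, Or.inl h⟩
    unfold CF.psi
    by_cases h : G.Adj x w
    · rw [if_pos (hiff.mpr h), if_pos h, hdegx x hxu hxv, hdegx w hwu hwv]
    · rw [if_neg (fun hc => h (hiff.mp hc)), if_neg h]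
  have hpsi_u : ∀ w, CF.psi Γ u w = CF.psi G u w + CF.psi G v w := by
    intro w
    by_cases hwu : w = u
    · subst hwu
      unfold CF.psi
      rw [if_neg (Γ.irrefl), if_neg (G.irrefl), if_neg (fun h => hnadj h.symm)]
      ring
    by_cases hwv : w = v
    · subst hwv
      unfold CF.psi
      rw [if_neg (fun h => (hadj u w).mp h |>.2.2.1 rfl), if_neg hnadj,
        if_neg (G.irrefl)]
      ring
    have hiff : Γ.Adj u w ↔ G.Adj u w ∨ G.Adj v w := by
      rw [hadj]
      constructor
      · rintro ⟨_, _, _, h | ⟨_, h⟩ | ⟨h, _⟩⟩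
        · exact Or.inl h
        · exact Or.inr h
        · exact absurd h hwu
      · rintro (h | h)
        · exact ⟨h.ne, huv, hwv, Or.inl h⟩
        · exact ⟨fun he => hnadj (by rw [he]; exact h.symm), huv, hwv,
            Or.inr (Or.inl ⟨rfl, h⟩)⟩
    unfold CF.psi
    by_cases h1 : G.Adj u w
    · have h2 : ¬ G.Adj v w := fun h2 => hcn w ⟨h1, h2⟩
      rw [if_pos (hiff.mpr (Or.inl h1)), if_pos h1, if_neg h2, add_zero,
        hdegu, hdegx w hwu hwv]
      have hle : CF.deg G w ≤ CF.deg G u := hu w h1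
      rw [min_eq_right hle, min_eq_right (le_trans hle (Nat.le_add_right _ _))]
    · by_cases h2 : G.Adj v w
      · rw [if_pos (hiff.mpr (Or.inr h2)), if_neg h1, if_pos h2, zero_add,
          hdegu, hdegx w hwu hwv]
        have hle : CF.deg G w ≤ CF.deg G v := hv w h2
        rw [min_eq_right hle, min_eq_right (le_trans hle (Nat.le_add_left _ _))]
      · rw [if_neg (fun hc => (hiff.mp hc).elim h1 h2), if_neg h1, if_neg h2]
        ring
  have hpsi_xu : ∀ x, x ≠ u → x ≠ v → CF.psi Γ x u = CF.psi G x u + CF.psi G x v := by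
    intro x hxu hxv
    have hiff : Γ.Adj x u ↔ G.Adj x u ∨ G.Adj x v := by
      rw [hadj]
      constructor
      · rintro ⟨_, _, _, h | ⟨h, _⟩ | ⟨_, h⟩⟩
        · exact Or.inl h
        · exact absurd h hxu
        · exact Or.inr h.symm
      · rintro (h | h)
        · exact ⟨h.ne, hxv, huv, Or.inl h⟩
        · exact ⟨hxu, hxv, huv, Or.inr (Or.inr ⟨rfl, h.symm⟩)⟩
    unfold CF.psi
    by_cases h1 : G.Adj x u
    · have h2 : ¬ G.Adj x v := fun h2 => hcn x ⟨h1.symm, h2.symm⟩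
      rw [if_pos (hiff.mpr (Or.inl h1)), if_pos h1, if_neg h2, add_zero,
        hdegu, hdegx x hxu hxv]
      have hle : CF.deg G x ≤ CF.deg G u := hu x h1.symm
      rw [min_eq_left hle, min_eq_left (le_trans hle (Nat.le_add_right _ _))]
    · by_cases h2 : G.Adj x v
      · rw [if_pos (hiff.mpr (Or.inr h2)), if_neg h1, if_pos h2, zero_add,
          hdegu, hdegx x hxu hxv]
        have hle : CF.deg G x ≤ CF.deg G v := hv x h2.symm
        rw [min_eq_left hle, min_eq_left (le_trans hle (Nat.le_add_left _ _))]
      · rw [if_neg (fun hc => (hiff.mp hc).elim h1 h2), if_neg h1, if_neg h2]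
        ring
  -- Psi values
  have hPsiu : CF.Psi Γ u = CF.Psi G u + CF.Psi G v := by
    unfold CF.Psi
    rw [← Finset.sum_add_distrib]
    exact Finset.sum_congr rfl fun w _ => hpsi_u w
  have hPsiv : CF.Psi Γ v = 0 := Finset.sum_eq_zero fun w _ => hpsi_v w
  have humem : u ∈ (Finset.univ : Finset V).erase v :=
    Finset.mem_erase.mpr ⟨huv, Finset.mem_univ u⟩
  have hPsix : ∀ x, x ≠ u → x ≠ v → CF.Psi Γ x = CF.Psi G x := by
    intro x hxu hxv
    unfold CF.Psi
    rw [← Finset.sum_erase_add _ _ (Finset.mem_univ v),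
      ← Finset.sum_erase_add _ _ humem,
      ← Finset.sum_erase_add (f := CF.psi G x) _ (Finset.mem_univ v),
      ← Finset.sum_erase_add (f := CF.psi G x) _ humem]
    have hrest : ∑ w ∈ (Finset.univ.erase v).erase u, CF.psi Γ x w
        = ∑ w ∈ (Finset.univ.erase v).erase u, CF.psi G x w := by
      refine Finset.sum_congr rfl fun w hw => ?_
      obtain ⟨hwu, hw2⟩ := Finset.mem_erase.mp hw
      obtain ⟨hwv, _⟩ := Finset.mem_erase.mp hw2
      exact hpsi_other x w hxu hxv hwu hwv
    rw [hrest, hpsi_xu x hxu hxv, hpsi_xv x]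
    ring
  have hSum : ∑ x, CF.Psi Γ x = ∑ x, CF.Psi G x := by
    rw [← Finset.sum_erase_add _ _ (Finset.mem_univ v),
      ← Finset.sum_erase_add _ _ humem,
      ← Finset.sum_erase_add (f := CF.Psi G) _ (Finset.mem_univ v),
      ← Finset.sum_erase_add (f := CF.Psi G) _ humem]
    have hrest : ∑ x ∈ (Finset.univ.erase v).erase u, CF.Psi Γ x
        = ∑ x ∈ (Finset.univ.erase v).erase u, CF.Psi G x := by
      refine Finset.sum_congr rfl fun x hx => ?_
      obtain ⟨hxu, hx2⟩ := Finset.mem_erase.mp hx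
      obtain ⟨hxv, _⟩ := Finset.mem_erase.mp hx2
      exact hPsix x hxu hxv
    rw [hrest, hPsiu, hPsiv]
    ring
  constructor
  · unfold CF.statPi
    rw [hPsiu, hSum, add_div]
  · intro x hxu hxv
    unfold CF.statPi
    rw [hPsix x hxu hxv, hSum]
end
end
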